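/- Let ε > 0, δ ∈ (0,1), and suppose k = (1/ε)·ln((e^ε + 2δ − 1)/((e^ε + 1)δ)) is a positive integer. Define π₀ by π₀(0)=0 and π₀(n+1) = min(e^ε·π₀(n)+δ, 1−e^{−ε}(1−π₀(n)−δ), 1). Then π₀ satisfies the reflection symmetry π₀(n) = 1 − π₀(2k + 1 − n) for all integers n with 0 ≤ n ≤ 2k + 1. -/

import Mathlib

open Real

theorem pi_opt_reflection_symmetry
    (ε δ : ℝ) (hε : 0 < ε) (hδ0 : 0 < δ) (hδ1 : δ < 1)
    (k : ℕ) (hk1 : 1 ≤ k)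
    (hk : (k : ℝ) = (1 / ε) * Real.log ((exp ε + 2 * δ - 1) / ((exp ε + 1) * δ)))
    (π₀ : ℕ → ℝ) (h0 : π₀ 0 = 0)
    (hrec : ∀ n, π₀ (n + 1) =
      min (min (exp ε * π₀ n + δ) (1 - exp (-ε) * (1 - π₀ n - δ))) 1) :
    ∀ n : ℕ, n ≤ 2 * k + 1 → π₀ n = 1 - π₀ (2 * k + 1 - n) := by
  have hE0 : (0:ℝ) < Real.exp ε := Real.exp_pos ε
  have hE : (1:ℝ) < Real.exp ε := by nlinarith [Real.add_one_le_exp ε]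
  have hE1 : Real.exp ε - 1 ≠ 0 := by linarith
  have hE2 : Real.exp ε + 1 ≠ 0 := by linarith
  -- the key constant
  have hc : Real.exp (ε * k) = (Real.exp ε + 2 * δ - 1) / ((Real.exp ε + 1) * δ) := by
    have hpos : (0:ℝ) < (Real.exp ε + 2 * δ - 1) / ((Real.exp ε + 1) * δ) := by
      apply div_pos (by linarith) (by positivity)
    have : ε * k = Real.log ((Real.exp ε + 2 * δ - 1) / ((Real.exp ε + 1) * δ)) := by
      rw [hk]; field_simp
    rw [this, Real.exp_log hpos]
  set x : ℕ → ℝ := fun n => δ * (Real.exp (ε * n) - 1) / (Real.exp ε - 1) with hxdef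
  have hx0 : x 0 = 0 := by simp [hxdef]
  have hxrec : ∀ n : ℕ, x (n + 1) = Real.exp ε * x n + δ := by
    intro n
    have h1 : ε * ((n : ℝ) + 1) = ε * n + ε := by ring
    simp only [hxdef]
    push_cast
    rw [h1, Real.exp_add]
    field_simp
    ring
  have hxnonneg : ∀ n : ℕ, 0 ≤ x n := by
    intro n
    have : (1:ℝ) ≤ Real.exp (ε * n) := by
      rw [show (1:ℝ) = Real.exp 0 by simp]
      exact Real.exp_le_exp.2 (by positivity)
    have : 0 ≤ Real.exp (ε * n) - 1 := by linarith
    simp only [hxdef]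
    apply div_nonneg (by nlinarith) (by linarith)
  have hxmono : ∀ m n : ℕ, m ≤ n → x m ≤ x n := by
    intro m n hmn
    have h1 : Real.exp (ε * m) ≤ Real.exp (ε * n) := by
      apply Real.exp_le_exp.2
      have : (m:ℝ) ≤ n := by exact_mod_cast hmn
      nlinarith
    simp only [hxdef]
    have h2 : (0:ℝ) < Real.exp ε - 1 := by linarith
    have h3 : δ * (Real.exp (ε * m) - 1) ≤ δ * (Real.exp (ε * n) - 1) := by nlinarith
    exact (div_le_div_iff_of_pos_right h2).mpr h3
  have hxk : x k = (1 - δ) / (Real.exp ε + 1) := by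
    simp only [hxdef]
    rw [hc]
    have hd : ((Real.exp ε + 1) * δ) ≠ 0 := by positivity
    field_simp
    ring
  have hxk1 : x (k + 1) = 1 - x k := by
    rw [hxrec, hxk]
    field_simp
    ring
  have hEi : Real.exp ε * (Real.exp ε)⁻¹ = 1 := mul_inv_cancel₀ (ne_of_gt hE0)
  have keyA : ∀ z : ℝ, (Real.exp ε + 1) * z ≤ 1 - δ →
      Real.exp ε * z + δ ≤ 1 - Real.exp (-ε) * (1 - z - δ) := by
    intro z hz
    rw [Real.exp_neg]
    have h2 : (Real.exp ε)⁻¹ * (1 - z - δ) ≤ 1 - Real.exp ε * z - δ := by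
      rw [inv_mul_le_iff₀ hE0]
      nlinarith [mul_nonneg (by linarith : (0:ℝ) ≤ Real.exp ε - 1)
        (by linarith : (0:ℝ) ≤ 1 - δ - (Real.exp ε + 1) * z)]
    linarith
  have phaseA : ∀ n : ℕ, n ≤ k → π₀ n = x n := by
    intro n
    induction n with
    | zero => intro _; rw [h0, hx0]
    | succ m ih =>
      intro hn
      have hm : m ≤ k := by omega
      have ihm := ih hm
      have hbound : (Real.exp ε + 1) * x m ≤ 1 - δ := by
        have := hxmono m k hm
        rw [hxk] at this
        rw [mul_comm]
        exact (le_div_iff₀ (by linarith)).mp this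
      have hA : Real.exp ε * x m + δ ≤ 1 - Real.exp (-ε) * (1 - x m - δ) :=
        keyA _ hbound
      have hA1 : Real.exp ε * x m + δ ≤ 1 := by
        have h1 := hxmono (m+1) k hn
        rw [hxk, hxrec] at h1
        have : (1 - δ) / (Real.exp ε + 1) < 1 := by
          rw [div_lt_one (by linarith)]; linarith
        linarith
      rw [hrec, ihm, min_eq_left hA, min_eq_left hA1, ← hxrec]
  have phaseB : ∀ i : ℕ, i ≤ k + 1 → π₀ (k + i) = 1 - x (k + 1 - i) := by
    intro i
    induction i with
    | zero =>
      intro _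
      simpa using (phaseA k le_rfl).trans (by rw [hxk1]; ring)
    | succ m ih =>
      intro hi
      have hm : m ≤ k := by omega
      have ihm := ih (by omega)
      set j := k - m with hj
      have hj1 : k + 1 - m = j + 1 := by omega
      have hj2 : k + 1 - (m + 1) = j := by omega
      have hjk : j ≤ k := by omega
      rw [hj1] at ihm
      have hbound : (Real.exp ε + 1) * x j ≤ 1 - δ := by
        have := hxmono j k hjk
        rw [hxk] at this
        rw [mul_comm]
        exact (le_div_iff₀ (by linarith)).mp this
      have hBval : 1 - Real.exp (-ε) * (1 - (1 - x (j+1)) - δ) = 1 - x j := by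
        rw [Real.exp_neg, hxrec]
        field_simp
        ring
      have hBA : 1 - Real.exp (-ε) * (1 - (1 - x (j+1)) - δ) ≤
          Real.exp ε * (1 - x (j+1)) + δ := by
        rw [hBval, hxrec]
        nlinarith [mul_nonneg (by linarith : (0:ℝ) ≤ Real.exp ε - 1)
          (by linarith : (0:ℝ) ≤ 1 - δ - (Real.exp ε + 1) * x j)]
      have hB1 : 1 - Real.exp (-ε) * (1 - (1 - x (j+1)) - δ) ≤ 1 := by
        rw [hBval]
        have := hxnonneg j
        linarith
      have hstep : k + (m + 1) = (k + m) + 1 := by omega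
      rw [hstep, hrec, ihm, min_eq_right hBA, min_eq_left hB1, hBval, hj2]
  intro n hn
  rcases le_or_gt n k with h | h
  · have h1 : π₀ n = x n := phaseA n h
    have h2 : 2 * k + 1 - n = k + (k + 1 - n) := by omega
    have h3 : k + 1 - (k + 1 - n) = n := by omega
    rw [h1, h2, phaseB (k + 1 - n) (by omega), h3]
    ring
  · have h4 : n - k ≤ k + 1 := by omega
    have hL : π₀ n = 1 - x (k + 1 - (n - k)) := by
      rw [show π₀ n = π₀ (k + (n - k)) from by rw [show k + (n - k) = n from by omega],
        phaseB (n - k) h4]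
    have hR : π₀ (2 * k + 1 - n) = x (k + 1 - (n - k)) := by
      rw [phaseA (2 * k + 1 - n) (by omega),
        show 2 * k + 1 - n = k + 1 - (n - k) from by omega]
    rw [hL, hR]
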